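/- There exists ε₀ > 0 such that for every L ≥ 0 there is a constant C' ≥ 0 (depending only on h, L and ε₀) such that for every ε with |ε| ≤ ε₀ and all φ₁, φ₂ ∈ B_L, one has sup_{x∈ℝ} |T_ε φ₁(x) − T_ε φ₂(x)| ≤ C' · sup_{x∈ℝ} |φ₁(x) − φ₂(x)|; in particular, T_ε is continuous on B_L in the C⁰ (uniform) topology. -/

import Mathlib

open MeasureTheory

/-- The coupled map `g_{ε,φ}(x) = x + ε ∫₀¹ h(x,y) φ(y) dy`. -/
noncomputable def gmap (h : ℝ → ℝ → ℝ) (ε : ℝ) (φ : ℝ → ℝ) : ℝ → ℝ :=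
  fun x => x + ε * ∫ y in (0:ℝ)..1, h x y * φ y

/-- The transfer operator of `g_{ε,φ}` applied to `u`: `(u / g') ∘ g⁻¹`. -/
noncomputable def Lop (h : ℝ → ℝ → ℝ) (ε : ℝ) (φ u : ℝ → ℝ) : ℝ → ℝ :=
  fun x => u (Function.invFun (gmap h ε φ) x) /
    deriv (gmap h ε φ) (Function.invFun (gmap h ε φ) x)

/-- The transfer operator of the doubling map. -/
noncomputable def Pop (ψ : ℝ → ℝ) : ℝ → ℝ :=
  fun x => (1/2) * ψ (x/2) + (1/2) * ψ ((x+1)/2)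

/-- The self-consistent transfer operator `T_ε φ = P (L_{ε,φ} φ)`. -/
noncomputable def Tsc (h : ℝ → ℝ → ℝ) (ε : ℝ) (φ : ℝ → ℝ) : ℝ → ℝ :=
  Pop (Lop h ε φ φ)

/-- `h` is 1-periodic in each variable. -/
def periodicH (h : ℝ → ℝ → ℝ) : Prop :=
  (∀ x y, h (x+1) y = h x y) ∧ (∀ x y, h x (y+1) = h x y)

/-- `B_L`: 1-periodic, nonnegative, `L`-Lipschitz densities with `∫₀¹ φ = 1`. -/
def memB (L : ℝ) (φ : ℝ → ℝ) : Prop :=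
  (∀ x, φ (x+1) = φ x) ∧ (∀ x, 0 ≤ φ x) ∧
  (∀ x y, |φ x - φ y| ≤ L * |x - y|) ∧ (∫ x in (0:ℝ)..1, φ x) = 1

/-- Bound for a continuous doubly-periodic function on the plane. -/
lemma aux_per_bound {E : Type*} [NormedAddCommGroup E] (f : ℝ × ℝ → E)
    (hf : Continuous f) (h1 : ∀ x y, f (x+1, y) = f (x, y))
    (h2 : ∀ x y, f (x, y+1) = f (x, y)) :
    ∃ M ≥ (0:ℝ), ∀ x y, ‖f (x, y)‖ ≤ M := by
  obtain ⟨C, hC⟩ := (isCompact_Icc (a := ((0:ℝ),(0:ℝ))) (b := (1,1))).exists_bound_of_continuousOn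
    hf.continuousOn
  refine ⟨max C 0, le_max_right _ _, fun x y => ?_⟩
  have px : Function.Periodic (fun t => f (t, y)) 1 := fun t => h1 t y
  have hx : f (Int.fract x, y) = f (x, y) := by
    have := px.sub_int_mul_eq (x := x) ⌊x⌋
    simpa [← Int.self_sub_floor] using this
  have py : Function.Periodic (fun t => f (Int.fract x, t)) 1 := fun t => h2 _ t
  have hy : f (Int.fract x, Int.fract y) = f (Int.fract x, y) := by
    have := py.sub_int_mul_eq (x := y) ⌊y⌋
    simpa [← Int.self_sub_floor] using this
  have hmem : (Int.fract x, Int.fract y) ∈ Set.Icc ((0:ℝ),(0:ℝ)) (1,1) := by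
    constructor <;> constructor <;> simp [Int.fract_nonneg, (Int.fract_lt_one _).le]
  calc ‖f (x, y)‖ = ‖f (Int.fract x, Int.fract y)‖ := by rw [hx] at hy; rw [← hy]
    _ ≤ C := hC _ hmem
    _ ≤ max C 0 := le_max_left _ _

/-- `fderiv` is invariant under a translation that fixes the function. -/
lemma aux_fderiv_shift {E : Type*} [NormedAddCommGroup E] [NormedSpace ℝ E]
    {f : ℝ × ℝ → E} (hd : Differentiable ℝ f) (v : ℝ × ℝ)
    (hper : ∀ p, f (p + v) = f p) (p : ℝ × ℝ) :
    fderiv ℝ f (p + v) = fderiv ℝ f p := by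
  have h1 : HasFDerivAt (fun q => f (q + v)) (fderiv ℝ f (p + v)) p := by
    have := (hd (p + v)).hasFDerivAt.comp p ((hasFDerivAt_id p).add_const v)
    exact this
  have h2 : HasFDerivAt f (fderiv ℝ f (p + v)) p := by
    have : (fun q => f (q + v)) = f := funext hper
    rwa [this] at h1
  exact h2.fderiv.symm

lemma aux_memB_cont {L : ℝ} (hL : 0 ≤ L) {φ : ℝ → ℝ} (hφ : memB L φ) : Continuous φ := by
  have : LipschitzWith L.toNNReal φ := by
    apply LipschitzWith.of_dist_le_mul
    intro x y
    have := hφ.2.2.1 x y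
    simpa [Real.dist_eq, Real.coe_toNNReal L hL] using this
  exact this.continuous

lemma aux_memB_le {L : ℝ} (hL : 0 ≤ L) {φ : ℝ → ℝ} (hφ : memB L φ) : ∀ t, φ t ≤ 1 + L := by
  have hc := aux_memB_cont hL hφ
  have key : ∀ t ∈ Set.Icc (0:ℝ) 1, φ t ≤ 1 + L := by
    intro t ht
    have h1 : ∀ x ∈ Set.Icc (0:ℝ) 1, φ t - L ≤ φ x := by
      intro x hx
      have h2 := hφ.2.2.1 t x
      have h3 : |t - x| ≤ 1 := by
        rw [abs_le]; constructor <;> [linarith [ht.1, hx.2]; linarith [ht.2, hx.1]]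
      have h4 : φ t - φ x ≤ L * |t - x| := (abs_le.mp h2).2
      nlinarith [abs_nonneg (t - x)]
    have h5 : (∫ _x in (0:ℝ)..1, (φ t - L)) ≤ ∫ x in (0:ℝ)..1, φ x :=
      intervalIntegral.integral_mono_on zero_le_one intervalIntegrable_const
        (hc.intervalIntegrable _ _) h1
    rw [hφ.2.2.2] at h5
    simp at h5
    linarith
  intro t
  have hper : Function.Periodic φ 1 := fun x => hφ.1 x
  have h6 : φ (Int.fract t) = φ t := by
    have := hper.sub_int_mul_eq (x := t) ⌊t⌋
    simpa [← Int.self_sub_floor] using this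
  rw [← h6]
  exact key _ ⟨Int.fract_nonneg t, (Int.fract_lt_one t).le⟩

/-- Interval integral over `[0,1]` of a function bounded by `C` is bounded by `C`. -/
lemma aux_norm_int (f : ℝ → ℝ) (C : ℝ) (hf : ∀ y, |f y| ≤ C) :
    |∫ y in (0:ℝ)..1, f y| ≤ C := by
  have := intervalIntegral.norm_integral_le_of_norm_le_const (a := (0:ℝ)) (b := 1) (C := C)
    (f := f) (fun y _ => hf y)
  simpa using this

set_option maxHeartbeats 1000000 in
/-- `T_ε` is Lipschitz on `B_L` with respect to the `C⁰` (uniform) norm; in particular it is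
continuous on `B_L` in the uniform topology. -/
theorem stmt4 (h : ℝ → ℝ → ℝ) (hC2 : ContDiff ℝ 2 (Function.uncurry h))
    (hper : periodicH h) :
    ∃ ε₀ > (0:ℝ), ∀ L : ℝ, 0 ≤ L → ∃ C' ≥ (0:ℝ), ∀ ε : ℝ, |ε| ≤ ε₀ →
      ∀ φ₁ φ₂ : ℝ → ℝ, memB L φ₁ → memB L φ₂ →
        (⨆ x : ℝ, |Tsc h ε φ₁ x - Tsc h ε φ₂ x|) ≤ C' * ⨆ x : ℝ, |φ₁ x - φ₂ x| := by
  classical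
  set H := Function.uncurry h with hH
  have hHc : Continuous H := hC2.continuous
  have hHd : Differentiable ℝ H := hC2.differentiable (by norm_num)
  set F := fderiv ℝ H with hF
  have hFc1 : ContDiff ℝ 1 F := hC2.fderiv_right (by norm_num)
  have hFc : Continuous F := hFc1.continuous
  have hFd : Differentiable ℝ F := hFc1.differentiable one_ne_zero
  have hF'c : Continuous (fderiv ℝ F) :=
    (hFc1.fderiv_right (m := 0) (by norm_num) : ContDiff ℝ 0 _).continuous
  have hHv1 : ∀ p : ℝ × ℝ, H (p + (1,0)) = H p := by
    intro p; have := hper.1 p.1 p.2; simpa [hH, Function.uncurry, Prod.ext_iff] using this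
  have hHv2 : ∀ p : ℝ × ℝ, H (p + (0,1)) = H p := by
    intro p; have := hper.2 p.1 p.2; simpa [hH, Function.uncurry, Prod.ext_iff] using this
  have hFv1 : ∀ p : ℝ × ℝ, F (p + (1,0)) = F p := aux_fderiv_shift hHd _ hHv1
  have hFv2 : ∀ p : ℝ × ℝ, F (p + (0,1)) = F p := aux_fderiv_shift hHd _ hHv2
  have hF'v1 : ∀ p : ℝ × ℝ, fderiv ℝ F (p + (1,0)) = fderiv ℝ F p := aux_fderiv_shift hFd _ hFv1
  have hF'v2 : ∀ p : ℝ × ℝ, fderiv ℝ F (p + (0,1)) = fderiv ℝ F p := aux_fderiv_shift hFd _ hFv2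
  obtain ⟨M₀, hM₀0, hM₀⟩ := aux_per_bound H hHc
    (fun x y => by simpa using hHv1 (x, y)) (fun x y => by simpa using hHv2 (x, y))
  obtain ⟨M₁, hM₁0, hM₁⟩ := aux_per_bound F hFc
    (fun x y => by simpa using hFv1 (x, y)) (fun x y => by simpa using hFv2 (x, y))
  obtain ⟨M₂, hM₂0, hM₂⟩ := aux_per_bound (fderiv ℝ F) hF'c
    (fun x y => by simpa using hF'v1 (x, y)) (fun x y => by simpa using hF'v2 (x, y))
  have hM₀' : ∀ x y : ℝ, |h x y| ≤ M₀ := fun x y => hM₀ x y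
  -- partial derivative in the first variable
  have hone : ‖((1:ℝ), (0:ℝ))‖ = 1 := by simp [Prod.norm_def]
  have hder : ∀ (y x : ℝ), HasDerivAt (fun t => h t y) (F (x, y) (1, 0)) x := by
    intro y x
    have hcurve : HasDerivAt (fun t : ℝ => (t, y)) ((1:ℝ), (0:ℝ)) x :=
      (hasDerivAt_id x).prodMk (hasDerivAt_const x y)
    have := ((hHd (x, y)).hasFDerivAt).comp_hasDerivAt x hcurve
    exact this
  have hh1bound : ∀ x y : ℝ, |F (x, y) (1, 0)| ≤ M₁ := by
    intro x y
    calc |F (x, y) (1, 0)| ≤ ‖F (x, y)‖ * ‖((1:ℝ), (0:ℝ))‖ := (F (x, y)).le_opNorm _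
      _ ≤ M₁ := by rw [hone, mul_one]; exact hM₁ x y
  have hh1cont : ∀ x : ℝ, Continuous (fun y => F (x, y) (1, 0)) := by
    intro x
    exact (hFc.comp (Continuous.prodMk_right x)).clm_apply continuous_const
  have hFlip : ∀ u v y : ℝ, |F (u, y) (1, 0) - F (v, y) (1, 0)| ≤ M₂ * |u - v| := by
    intro u v y
    have hlip : ‖F (u, y) - F (v, y)‖ ≤ M₂ * ‖((u, y) : ℝ × ℝ) - (v, y)‖ :=
      (convex_univ).norm_image_sub_le_of_norm_fderiv_le
        (fun p _ => hFd p) (fun p _ => hM₂ p.1 p.2) trivial trivial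
    have hn : ‖((u, y) : ℝ × ℝ) - (v, y)‖ = |u - v| := by
      simp [Prod.norm_def, Prod.sub_def]
    calc |F (u, y) (1, 0) - F (v, y) (1, 0)| = |(F (u, y) - F (v, y)) (1, 0)| := by simp
      _ ≤ ‖F (u, y) - F (v, y)‖ * ‖((1:ℝ), (0:ℝ))‖ := (F (u, y) - F (v, y)).le_opNorm _
      _ ≤ M₂ * |u - v| := by rw [hone, mul_one, ← hn]; exact hlip
  -- choice of ε₀
  refine ⟨1 / (2 * (M₁ + 1)), by positivity, ?_⟩
  set ε₀ : ℝ := 1 / (2 * (M₁ + 1)) with hε₀def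
  have hε₀pos : 0 < ε₀ := by positivity
  have hε₀M₁ : ε₀ * M₁ ≤ 1/2 := by
    rw [hε₀def, div_mul_eq_mul_div, one_mul, div_le_iff₀ (by positivity)]
    nlinarith
  intro L hL
  -- the constant
  refine ⟨6*(1 + 2*L*ε₀*M₀) + 4*(1+L)*ε₀*(M₁ + 2*M₂*(1+L)*ε₀*M₀), by positivity, ?_⟩
  intro ε hε φ₁ φ₂ hφ₁ hφ₂
  set δ : ℝ := ⨆ x : ℝ, |φ₁ x - φ₂ x| with hδdef
  have hφ₁c := aux_memB_cont hL hφ₁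
  have hφ₂c := aux_memB_cont hL hφ₂
  have hφ₁le := aux_memB_le hL hφ₁
  have hφ₂le := aux_memB_le hL hφ₂
  have hbdd : BddAbove (Set.range fun x => |φ₁ x - φ₂ x|) := by
    refine ⟨2*(1+L), ?_⟩
    rintro _ ⟨x, rfl⟩
    have := abs_sub_abs_le_abs_sub (φ₁ x) (φ₂ x)
    have h1 : |φ₁ x| ≤ 1 + L := by rw [abs_of_nonneg (hφ₁.2.1 x)]; exact hφ₁le x
    have h2 : |φ₂ x| ≤ 1 + L := by rw [abs_of_nonneg (hφ₂.2.1 x)]; exact hφ₂le x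
    calc |φ₁ x - φ₂ x| ≤ |φ₁ x| + |φ₂ x| := abs_sub _ _
      _ ≤ 2*(1+L) := by linarith
  have hδx : ∀ x, |φ₁ x - φ₂ x| ≤ δ := fun x => le_ciSup hbdd x
  have hδ0 : 0 ≤ δ := (abs_nonneg _).trans (hδx 0)
  -- generic facts about gmap for φ ∈ B_L
  have hgd : ∀ φ : ℝ → ℝ, memB L φ → ∀ x₀ : ℝ,
      HasDerivAt (gmap h ε φ) (1 + ε * ∫ y in (0:ℝ)..1, F (x₀, y) (1, 0) * φ y) x₀ := by
    intro φ hφ x₀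
    have hφc := aux_memB_cont hL hφ
    have hcont : ∀ x : ℝ, Continuous fun y => h x y * φ y := by
      intro x
      exact ((hHc.comp (Continuous.prodMk_right x)).mul hφc)
    have key := intervalIntegral.hasDerivAt_integral_of_dominated_loc_of_deriv_le
      (F := fun x y => h x y * φ y) (F' := fun x y => F (x, y) (1, 0) * φ y)
      (x₀ := x₀) (a := 0) (b := 1) (μ := volume) (bound := fun y => M₁ * φ y)
      (Filter.univ_mem)
      (Filter.Eventually.of_forall fun x => (hcont x).aestronglyMeasurable)
      ((hcont x₀).intervalIntegrable _ _)
      (((hh1cont x₀).mul hφc).aestronglyMeasurable)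
      (Filter.Eventually.of_forall fun y _ => fun x _ => by
        have hb : |F (x, y) (1, 0)| * |φ y| ≤ M₁ * φ y := by
          rw [abs_of_nonneg (hφ.2.1 y)]
          exact mul_le_mul_of_nonneg_right (hh1bound x y) (hφ.2.1 y)
        simpa [abs_mul] using hb)
      ((continuous_const.mul hφc).intervalIntegrable _ _)
      (Filter.Eventually.of_forall fun y _ => fun x _ => (hder y x).mul_const (φ y))
    have := (hasDerivAt_id x₀).add (key.2.const_mul ε)
    exact this
  have hdb : ∀ φ : ℝ → ℝ, memB L φ → ∀ x : ℝ,
      |∫ y in (0:ℝ)..1, F (x, y) (1, 0) * φ y| ≤ M₁ := by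
    intro φ hφ x
    have hφc := aux_memB_cont hL hφ
    have h1 : |∫ y in (0:ℝ)..1, F (x, y) (1, 0) * φ y| ≤
        ∫ y in (0:ℝ)..1, |F (x, y) (1, 0) * φ y| :=
      intervalIntegral.abs_integral_le_integral_abs zero_le_one
    have h2 : (∫ y in (0:ℝ)..1, |F (x, y) (1, 0) * φ y|) ≤ ∫ y in (0:ℝ)..1, M₁ * φ y := by
      apply intervalIntegral.integral_mono_on zero_le_one
        (((hh1cont x).mul hφc).abs.intervalIntegrable _ _)
        ((continuous_const.mul hφc).intervalIntegrable _ _)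
      intro y _
      simp only [Pi.mul_apply]
      rw [abs_mul, abs_of_nonneg (hφ.2.1 y)]
      exact mul_le_mul_of_nonneg_right (hh1bound x y) (hφ.2.1 y)
    have h3 : (∫ y in (0:ℝ)..1, M₁ * φ y) = M₁ := by
      rw [intervalIntegral.integral_const_mul, hφ.2.2.2, mul_one]
    linarith
  have hgderiv : ∀ φ : ℝ → ℝ, memB L φ → ∀ x : ℝ,
      deriv (gmap h ε φ) x = 1 + ε * ∫ y in (0:ℝ)..1, F (x, y) (1, 0) * φ y :=
    fun φ hφ x => (hgd φ hφ x).deriv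
  have hεd : ∀ φ : ℝ → ℝ, memB L φ → ∀ x : ℝ,
      |ε * ∫ y in (0:ℝ)..1, F (x, y) (1, 0) * φ y| ≤ 1/2 := by
    intro φ hφ x
    rw [abs_mul]
    calc |ε| * |∫ y in (0:ℝ)..1, F (x, y) (1, 0) * φ y| ≤ ε₀ * M₁ :=
        mul_le_mul hε (hdb φ hφ x) (abs_nonneg _) hε₀pos.le
      _ ≤ 1/2 := hε₀M₁
  have hglb : ∀ φ : ℝ → ℝ, memB L φ → ∀ x : ℝ, 1/2 ≤ deriv (gmap h ε φ) x := by
    intro φ hφ x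
    rw [hgderiv φ hφ x]
    have := abs_le.mp (hεd φ hφ x)
    linarith [this.1]
  have hgub : ∀ φ : ℝ → ℝ, memB L φ → ∀ x : ℝ, deriv (gmap h ε φ) x ≤ 3/2 := by
    intro φ hφ x
    rw [hgderiv φ hφ x]
    have := abs_le.mp (hεd φ hφ x)
    linarith [this.2]
  have hgdiff : ∀ φ : ℝ → ℝ, memB L φ → Differentiable ℝ (gmap h ε φ) :=
    fun φ hφ x => (hgd φ hφ x).differentiableAt
  -- expansion property
  have hexp : ∀ φ : ℝ → ℝ, memB L φ → ∀ u v : ℝ,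
      |u - v| ≤ 2 * |gmap h ε φ u - gmap h ε φ v| := by
    intro φ hφ u v
    have hmono : Monotone (fun x => gmap h ε φ x - x/2) := by
      apply monotone_of_deriv_nonneg
      · exact (hgdiff φ hφ).sub (differentiable_id.div_const 2)
      · intro x
        have hd : HasDerivAt (fun x => gmap h ε φ x - x/2) (deriv (gmap h ε φ) x - 1/2) x := by
          have := ((hgd φ hφ x).sub ((hasDerivAt_id x).div_const 2))
          rw [hgderiv φ hφ x]
          simpa [Pi.sub_def] using this
        rw [hd.deriv]
        linarith [hglb φ hφ x]
    rcases le_total v u with huv | huv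
    · have h1 : gmap h ε φ v - v/2 ≤ gmap h ε φ u - u/2 := hmono huv
      have h2 : 0 ≤ gmap h ε φ u - gmap h ε φ v := by linarith
      rw [abs_of_nonneg (by linarith : (0:ℝ) ≤ u - v), abs_of_nonneg h2]
      linarith
    · have h1 : gmap h ε φ u - u/2 ≤ gmap h ε φ v - v/2 := hmono huv
      have h2 : gmap h ε φ u - gmap h ε φ v ≤ 0 := by linarith
      rw [abs_of_nonpos (by linarith : u - v ≤ 0), abs_of_nonpos h2]
      linarith
  -- surjectivity
  have hsurj : ∀ φ : ℝ → ℝ, memB L φ → Function.Surjective (gmap h ε φ) := by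
    intro φ hφ
    have hφle' := aux_memB_le hL hφ
    have hcb : ∀ x : ℝ, |ε * ∫ y in (0:ℝ)..1, h x y * φ y| ≤ ε₀ * (M₀ * (1 + L)) := by
      intro x
      rw [abs_mul]
      apply mul_le_mul hε _ (abs_nonneg _) hε₀pos.le
      apply aux_norm_int
      intro y
      rw [abs_mul]
      apply mul_le_mul (hM₀' x y) _ (abs_nonneg _) hM₀0
      rw [abs_of_nonneg (hφ.2.1 y)]
      exact hφle' y
    have hcont : Continuous (gmap h ε φ) := (hgdiff φ hφ).continuous
    have htop : Filter.Tendsto (gmap h ε φ) Filter.atTop Filter.atTop := by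
      apply Filter.tendsto_atTop_mono (fun x => ?_)
        (Filter.tendsto_atTop_add_const_right _ (-(ε₀ * (M₀ * (1 + L)))) Filter.tendsto_id)
      have := abs_le.mp (hcb x)
      simp only [gmap, id]
      linarith [this.1]
    have hbot : Filter.Tendsto (gmap h ε φ) Filter.atBot Filter.atBot := by
      apply Filter.tendsto_atBot_mono (fun x => ?_)
        (Filter.tendsto_atBot_add_const_right _ (ε₀ * (M₀ * (1 + L))) Filter.tendsto_id)
      have := abs_le.mp (hcb x)
      simp only [gmap, id]
      linarith [this.2]
    exact hcont.surjective htop hbot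
  -- the two inverse points
  have key : ∀ z : ℝ, |Lop h ε φ₁ φ₁ z - Lop h ε φ₂ φ₂ z| ≤
      (6*(1 + 2*L*ε₀*M₀) + 4*(1+L)*ε₀*(M₁ + 2*M₂*(1+L)*ε₀*M₀)) * δ := by
    intro z
    set a₁ : ℝ := Function.invFun (gmap h ε φ₁) z with ha₁def
    set a₂ : ℝ := Function.invFun (gmap h ε φ₂) z with ha₂def
    have hg₁a : gmap h ε φ₁ a₁ = z := Function.invFun_eq (hsurj φ₁ hφ₁ z)
    have hg₂a : gmap h ε φ₂ a₂ = z := Function.invFun_eq (hsurj φ₂ hφ₂ z)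
    -- |a₁ - a₂| ≤ 2 ε₀ M₀ δ
    have hcdiff : ∀ x : ℝ, |(∫ y in (0:ℝ)..1, h x y * φ₁ y) - ∫ y in (0:ℝ)..1, h x y * φ₂ y|
        ≤ M₀ * δ := by
      intro x
      have hi1 : IntervalIntegrable (fun y => h x y * φ₁ y) volume (0:ℝ) 1 :=
        (((hHc.comp (Continuous.prodMk_right x)).mul hφ₁c :
          Continuous fun y => h x y * φ₁ y)).intervalIntegrable _ _
      have hi2 : IntervalIntegrable (fun y => h x y * φ₂ y) volume (0:ℝ) 1 :=
        (((hHc.comp (Continuous.prodMk_right x)).mul hφ₂c :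
          Continuous fun y => h x y * φ₂ y)).intervalIntegrable _ _
      rw [← intervalIntegral.integral_sub hi1 hi2]
      apply aux_norm_int
      intro y
      have : h x y * φ₁ y - h x y * φ₂ y = h x y * (φ₁ y - φ₂ y) := by ring
      rw [this, abs_mul]
      exact mul_le_mul (hM₀' x y) (hδx y) (abs_nonneg _) hM₀0
    have haa : |a₁ - a₂| ≤ 2 * (ε₀ * (M₀ * δ)) := by
      have h1 : |a₁ - a₂| ≤ 2 * |gmap h ε φ₁ a₁ - gmap h ε φ₁ a₂| := hexp φ₁ hφ₁ a₁ a₂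
      have h2 : gmap h ε φ₁ a₁ - gmap h ε φ₁ a₂ = gmap h ε φ₂ a₂ - gmap h ε φ₁ a₂ := by
        rw [hg₁a, hg₂a]
      have h3 : |gmap h ε φ₂ a₂ - gmap h ε φ₁ a₂| ≤ ε₀ * (M₀ * δ) := by
        have : gmap h ε φ₂ a₂ - gmap h ε φ₁ a₂ =
            ε * ((∫ y in (0:ℝ)..1, h a₂ y * φ₂ y) - ∫ y in (0:ℝ)..1, h a₂ y * φ₁ y) := by
          simp only [gmap]; ring
        rw [this, abs_mul, abs_sub_comm]
        exact mul_le_mul hε (hcdiff a₂) (abs_nonneg _) hε₀pos.le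
      rw [h2] at h1
      linarith
    -- difference of derivatives
    have hddiff : |(∫ y in (0:ℝ)..1, F (a₂, y) (1, 0) * φ₁ y)
        - ∫ y in (0:ℝ)..1, F (a₂, y) (1, 0) * φ₂ y| ≤ M₁ * δ := by
      rw [← intervalIntegral.integral_sub
        ((show Continuous fun y => F (a₂, y) (1, 0) * φ₁ y from (hh1cont a₂).mul hφ₁c).intervalIntegrable _ _)
        ((show Continuous fun y => F (a₂, y) (1, 0) * φ₂ y from (hh1cont a₂).mul hφ₂c).intervalIntegrable _ _)]
      apply aux_norm_int
      intro y
      have : F (a₂, y) (1, 0) * φ₁ y - F (a₂, y) (1, 0) * φ₂ y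
          = F (a₂, y) (1, 0) * (φ₁ y - φ₂ y) := by ring
      rw [this, abs_mul]
      exact mul_le_mul (hh1bound a₂ y) (hδx y) (abs_nonneg _) hM₁0
    have hdlip : |(∫ y in (0:ℝ)..1, F (a₁, y) (1, 0) * φ₁ y)
        - ∫ y in (0:ℝ)..1, F (a₂, y) (1, 0) * φ₁ y| ≤ M₂ * (1 + L) * |a₁ - a₂| := by
      rw [← intervalIntegral.integral_sub
        ((show Continuous fun y => F (a₁, y) (1, 0) * φ₁ y from (hh1cont a₁).mul hφ₁c).intervalIntegrable _ _)
        ((show Continuous fun y => F (a₂, y) (1, 0) * φ₁ y from (hh1cont a₂).mul hφ₁c).intervalIntegrable _ _)]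
      apply aux_norm_int
      intro y
      have : F (a₁, y) (1, 0) * φ₁ y - F (a₂, y) (1, 0) * φ₁ y
          = (F (a₁, y) (1, 0) - F (a₂, y) (1, 0)) * φ₁ y := by ring
      rw [this, abs_mul]
      calc |F (a₁, y) (1, 0) - F (a₂, y) (1, 0)| * |φ₁ y| ≤ (M₂ * |a₁ - a₂|) * (1 + L) := by
            apply mul_le_mul (hFlip a₁ a₂ y) _ (abs_nonneg _) (by positivity)
            rw [abs_of_nonneg (hφ₁.2.1 y)]; exact hφ₁le y
        _ = M₂ * (1 + L) * |a₁ - a₂| := by ring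
    -- set up D values
    set D₁ : ℝ := deriv (gmap h ε φ₁) a₁ with hD₁def
    set D₂ : ℝ := deriv (gmap h ε φ₂) a₂ with hD₂def
    have hD₁l : 1/2 ≤ D₁ := hglb φ₁ hφ₁ a₁
    have hD₁u : D₁ ≤ 3/2 := hgub φ₁ hφ₁ a₁
    have hD₂l : 1/2 ≤ D₂ := hglb φ₂ hφ₂ a₂
    have hD₂u : D₂ ≤ 3/2 := hgub φ₂ hφ₂ a₂
    have hDdiff : |D₁ - D₂| ≤ ε₀ * (M₁ * δ + M₂ * (1 + L) * (2 * (ε₀ * (M₀ * δ)))) := by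
      rw [hD₁def, hD₂def, hgderiv φ₁ hφ₁ a₁, hgderiv φ₂ hφ₂ a₂]
      have heq : (1 + ε * ∫ y in (0:ℝ)..1, F (a₁, y) (1, 0) * φ₁ y)
          - (1 + ε * ∫ y in (0:ℝ)..1, F (a₂, y) (1, 0) * φ₂ y)
          = ε * (((∫ y in (0:ℝ)..1, F (a₁, y) (1, 0) * φ₁ y)
              - ∫ y in (0:ℝ)..1, F (a₂, y) (1, 0) * φ₁ y)
            + ((∫ y in (0:ℝ)..1, F (a₂, y) (1, 0) * φ₁ y)
              - ∫ y in (0:ℝ)..1, F (a₂, y) (1, 0) * φ₂ y)) := by ring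
      rw [heq, abs_mul]
      apply mul_le_mul hε _ (abs_nonneg _) hε₀pos.le
      calc |(((∫ y in (0:ℝ)..1, F (a₁, y) (1, 0) * φ₁ y)
              - ∫ y in (0:ℝ)..1, F (a₂, y) (1, 0) * φ₁ y)
            + ((∫ y in (0:ℝ)..1, F (a₂, y) (1, 0) * φ₁ y)
              - ∫ y in (0:ℝ)..1, F (a₂, y) (1, 0) * φ₂ y))|
          ≤ M₂ * (1 + L) * |a₁ - a₂| + M₁ * δ := by
            refine (abs_add_le _ _).trans (add_le_add hdlip hddiff)
        _ ≤ M₁ * δ + M₂ * (1 + L) * (2 * (ε₀ * (M₀ * δ))) := by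
            have := mul_le_mul_of_nonneg_left haa (by positivity : (0:ℝ) ≤ M₂ * (1 + L))
            linarith
    -- difference of φ values
    have hφdiff : |φ₁ a₁ - φ₂ a₂| ≤ δ + L * (2 * (ε₀ * (M₀ * δ))) := by
      have h1 : |φ₁ a₁ - φ₂ a₁| ≤ δ := hδx a₁
      have h2 : |φ₂ a₁ - φ₂ a₂| ≤ L * |a₁ - a₂| := hφ₂.2.2.1 a₁ a₂
      have h3 : |φ₁ a₁ - φ₂ a₂| ≤ |φ₁ a₁ - φ₂ a₁| + |φ₂ a₁ - φ₂ a₂| := by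
        have := abs_add_le (φ₁ a₁ - φ₂ a₁) (φ₂ a₁ - φ₂ a₂)
        simpa using this
      have h4 : L * |a₁ - a₂| ≤ L * (2 * (ε₀ * (M₀ * δ))) :=
        mul_le_mul_of_nonneg_left haa hL
      linarith
    -- assemble
    have hLop : Lop h ε φ₁ φ₁ z - Lop h ε φ₂ φ₂ z
        = ((φ₁ a₁ - φ₂ a₂) * D₂ + φ₂ a₂ * (D₂ - D₁)) / (D₁ * D₂) := by
      have hD₁0 : D₁ ≠ 0 := by linarith
      have hD₂0 : D₂ ≠ 0 := by linarith
      simp only [Lop, ← ha₁def, ← ha₂def, ← hD₁def, ← hD₂def]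
      field_simp
      ring
    rw [hLop]
    have hDD : 1/4 ≤ D₁ * D₂ := by nlinarith
    have habs : |((φ₁ a₁ - φ₂ a₂) * D₂ + φ₂ a₂ * (D₂ - D₁)) / (D₁ * D₂)|
        ≤ 4 * |(φ₁ a₁ - φ₂ a₂) * D₂ + φ₂ a₂ * (D₂ - D₁)| := by
      rw [abs_div, abs_of_pos (by linarith : (0:ℝ) < D₁ * D₂)]
      rw [div_le_iff₀ (by linarith : (0:ℝ) < D₁ * D₂)]
      nlinarith [abs_nonneg ((φ₁ a₁ - φ₂ a₂) * D₂ + φ₂ a₂ * (D₂ - D₁))]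
    have hnum : |(φ₁ a₁ - φ₂ a₂) * D₂ + φ₂ a₂ * (D₂ - D₁)|
        ≤ |φ₁ a₁ - φ₂ a₂| * (3/2) + (1 + L) * |D₂ - D₁| := by
      calc |(φ₁ a₁ - φ₂ a₂) * D₂ + φ₂ a₂ * (D₂ - D₁)|
          ≤ |(φ₁ a₁ - φ₂ a₂) * D₂| + |φ₂ a₂ * (D₂ - D₁)| := abs_add_le _ _
        _ ≤ |φ₁ a₁ - φ₂ a₂| * (3/2) + (1 + L) * |D₂ - D₁| := by
            rw [abs_mul, abs_mul]
            apply add_le_add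
            · apply mul_le_mul_of_nonneg_left _ (abs_nonneg _)
              rw [abs_of_pos (by linarith : (0:ℝ) < D₂)]; exact hD₂u
            · apply mul_le_mul_of_nonneg_right _ (abs_nonneg _)
              rw [abs_of_nonneg (hφ₂.2.1 a₂)]; exact hφ₂le a₂
    have hDsym : |D₂ - D₁| = |D₁ - D₂| := abs_sub_comm _ _
    calc |((φ₁ a₁ - φ₂ a₂) * D₂ + φ₂ a₂ * (D₂ - D₁)) / (D₁ * D₂)|
        ≤ 4 * |(φ₁ a₁ - φ₂ a₂) * D₂ + φ₂ a₂ * (D₂ - D₁)| := habs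
      _ ≤ 4 * (|φ₁ a₁ - φ₂ a₂| * (3/2) + (1 + L) * |D₂ - D₁|) := by linarith
      _ ≤ (6*(1 + 2*L*ε₀*M₀) + 4*(1+L)*ε₀*(M₁ + 2*M₂*(1+L)*ε₀*M₀)) * δ := by
          rw [hDsym]
          have h1 := hφdiff
          have h2 := hDdiff
          have hq : 4*(1+L) * |D₁ - D₂|
              ≤ 4*(1+L) * (ε₀ * (M₁ * δ + M₂ * (1 + L) * (2 * (ε₀ * (M₀ * δ))))) :=
            mul_le_mul_of_nonneg_left h2 (by positivity)
          have heq2 : (6*(1 + 2*L*ε₀*M₀) + 4*(1+L)*ε₀*(M₁ + 2*M₂*(1+L)*ε₀*M₀)) * δ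
              = 6 * (δ + L * (2 * (ε₀ * (M₀ * δ))))
                + 4*(1+L) * (ε₀ * (M₁ * δ + M₂ * (1 + L) * (2 * (ε₀ * (M₀ * δ))))) := by
            ring
          rw [heq2]
          nlinarith [hq, h1]
  -- conclude via Pop / Tsc
  have hpt : ∀ x : ℝ, |Tsc h ε φ₁ x - Tsc h ε φ₂ x| ≤
      (6*(1 + 2*L*ε₀*M₀) + 4*(1+L)*ε₀*(M₁ + 2*M₂*(1+L)*ε₀*M₀)) * δ := by
    intro x
    have h1 := key (x/2)
    have h2 := key ((x+1)/2)
    have heq : Tsc h ε φ₁ x - Tsc h ε φ₂ x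
        = (1/2) * (Lop h ε φ₁ φ₁ (x/2) - Lop h ε φ₂ φ₂ (x/2))
          + (1/2) * (Lop h ε φ₁ φ₁ ((x+1)/2) - Lop h ε φ₂ φ₂ ((x+1)/2)) := by
      simp only [Tsc, Pop]; ring
    rw [heq]
    calc |(1/2) * (Lop h ε φ₁ φ₁ (x/2) - Lop h ε φ₂ φ₂ (x/2))
          + (1/2) * (Lop h ε φ₁ φ₁ ((x+1)/2) - Lop h ε φ₂ φ₂ ((x+1)/2))|
        ≤ |(1/2) * (Lop h ε φ₁ φ₁ (x/2) - Lop h ε φ₂ φ₂ (x/2))|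
          + |(1/2) * (Lop h ε φ₁ φ₁ ((x+1)/2) - Lop h ε φ₂ φ₂ ((x+1)/2))| := abs_add_le _ _
      _ ≤ (6*(1 + 2*L*ε₀*M₀) + 4*(1+L)*ε₀*(M₁ + 2*M₂*(1+L)*ε₀*M₀)) * δ := by
          rw [abs_mul, abs_mul]
          have : |(1:ℝ)/2| = 1/2 := by norm_num
          rw [this]
          linarith
  apply Real.iSup_le hpt
  positivity
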